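/- Let A be an N×N matrix with all entries strictly positive. If u > 0 is a componentwise positive vector, ρ a real number with A u ≤ ρ u componentwise and A u ≠ ρ u, then ρ(A) < ρ. -/

import Mathlib

/-- The spectral radius of a real square matrix: the supremum of the moduli of
its complex eigenvalues. -/
noncomputable def specRad {n : ℕ} (A : Matrix (Fin n) (Fin n) ℝ) : ℝ :=
  sSup ((fun z : ℂ => ‖z‖) '' spectrum ℂ (A.map (Complex.ofReal)))

lemma eig_bound {N : ℕ} (A : Matrix (Fin N) (Fin N) ℝ)
    (hA : ∀ i j, 0 ≤ A i j) (v : Fin N → ℝ) (hv : ∀ i, 0 < v i) (c : ℝ)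
    (hAv : ∀ i, A.mulVec v i ≤ c * v i) (z : ℂ)
    (hz : z ∈ spectrum ℂ (A.map Complex.ofReal)) : ‖z‖ ≤ c := by
  set B := A.map (Complex.ofReal) with hB
  rw [← AlgEquiv.spectrum_eq (Matrix.toLinAlgEquiv' :
      Matrix (Fin N) (Fin N) ℂ ≃ₐ[ℂ] _) B,
    ← Module.End.hasEigenvalue_iff_mem_spectrum] at hz
  obtain ⟨x, hx⟩ := hz.exists_hasEigenvector
  have hxeq : B.mulVec x = z • x := by
    have := hx.apply_eq_smul
    simpa [Matrix.toLinAlgEquiv'_apply] using this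
  obtain ⟨j, hj⟩ := Function.ne_iff.mp hx.2
  have hNe : (Finset.univ : Finset (Fin N)).Nonempty := ⟨j, Finset.mem_univ j⟩
  obtain ⟨i₀, -, hi₀⟩ := Finset.exists_max_image Finset.univ
    (fun i => ‖x i‖ / v i) hNe
  set m := ‖x i₀‖ / v i₀ with hm
  have hmpos : 0 < m := by
    have h1 : 0 < ‖x j‖ / v j :=
      div_pos (by simpa using hj) (hv j)
    exact lt_of_lt_of_le h1 (hi₀ j (Finset.mem_univ j))
  have hxi₀ : ‖x i₀‖ = m * v i₀ := by
    rw [hm, div_mul_cancel₀ _ (hv i₀).ne']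
  have hxk : ∀ k, ‖x k‖ ≤ m * v k := by
    intro k
    have := hi₀ k (Finset.mem_univ k)
    rwa [div_le_iff₀ (hv k)] at this
  have key : ‖z‖ * (m * v i₀) ≤ c * (m * v i₀) := by
    have h1 : ‖z‖ * ‖x i₀‖ = ‖B.mulVec x i₀‖ := by
      rw [hxeq]; simp [map_mul]
    have h2 : ‖B.mulVec x i₀‖ ≤ ∑ k, A i₀ k * ‖x k‖ := by
      calc ‖B.mulVec x i₀‖ ≤ ∑ k, ‖B i₀ k * x k‖ := by
            simpa [Matrix.mulVec, dotProduct] using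
              norm_sum_le Finset.univ (fun k => B i₀ k * x k)
        _ = ∑ k, A i₀ k * ‖x k‖ := by
            refine Finset.sum_congr rfl fun k _ => ?_
            simp [hB, Matrix.map_apply, map_mul, Complex.norm_real, Real.norm_eq_abs, abs_of_nonneg (hA i₀ k)]
    have h3 : ∑ k, A i₀ k * ‖x k‖ ≤ m * A.mulVec v i₀ := by
      rw [Matrix.mulVec, dotProduct, Finset.mul_sum]
      refine Finset.sum_le_sum fun k _ => ?_
      have := mul_le_mul_of_nonneg_left (hxk k) (hA i₀ k)
      calc A i₀ k * ‖x k‖ ≤ A i₀ k * (m * v k) := this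
        _ = m * (A i₀ k * v k) := by ring
    have h4 : m * A.mulVec v i₀ ≤ m * (c * v i₀) :=
      mul_le_mul_of_nonneg_left (hAv i₀) hmpos.le
    calc ‖z‖ * (m * v i₀) = ‖z‖ * ‖x i₀‖ := by rw [hxi₀]
      _ = ‖B.mulVec x i₀‖ := h1
      _ ≤ ∑ k, A i₀ k * ‖x k‖ := h2
      _ ≤ m * A.mulVec v i₀ := h3
      _ ≤ m * (c * v i₀) := h4
      _ = c * (m * v i₀) := by ring
  exact le_of_mul_le_mul_right key (mul_pos hmpos (hv i₀))

theorem stmt1 {N : ℕ} (A : Matrix (Fin N) (Fin N) ℝ)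
    (hA : ∀ i j, 0 < A i j) (u : Fin N → ℝ) (hu : ∀ i, 0 < u i) (ρ : ℝ)
    (h : A.mulVec u ≤ ρ • u) (hne : A.mulVec u ≠ ρ • u) : specRad A < ρ := by
  have hN : N ≠ 0 := by
    rintro rfl
    exact hne (funext fun i => i.elim0)
  have hNe : (Finset.univ : Finset (Fin N)).Nonempty :=
    ⟨⟨0, Nat.pos_of_ne_zero hN⟩, Finset.mem_univ _⟩
  set v := A.mulVec u with hv
  have hvpos : ∀ i, 0 < v i := by
    intro i
    rw [hv]
    simp only [Matrix.mulVec, dotProduct]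
    exact Finset.sum_pos (fun j _ => mul_pos (hA i j) (hu j)) hNe
  set w := ρ • u - A.mulVec u with hw
  have hwnn : ∀ j, 0 ≤ w j := by
    intro j
    have hj := h j
    simp only [Pi.smul_apply, smul_eq_mul] at hj
    simp only [hw, Pi.sub_apply, Pi.smul_apply, smul_eq_mul, ← hv]
    linarith
  obtain ⟨j₀, hj₀⟩ : ∃ j, 0 < w j := by
    by_contra hc
    push_neg at hc
    refine hne (funext fun i => ?_)
    have h1 := hwnn i
    have h2 := hc i
    have : w i = 0 := le_antisymm h2 h1
    simp only [hw, Pi.sub_apply, Pi.smul_apply, smul_eq_mul, ← hv] at this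
    simp only [Pi.smul_apply, smul_eq_mul]
    linarith
  have hmw : A.mulVec w = ρ • v - A.mulVec v := by
    rw [hw, Matrix.mulVec_sub, Matrix.mulVec_smul, hv]
  have hstrict : ∀ i, A.mulVec v i < ρ * v i := by
    intro i
    have hpos : 0 < A.mulVec w i := by
      simp only [Matrix.mulVec, dotProduct]
      refine Finset.sum_pos' (fun j _ => mul_nonneg (hA i j).le (hwnn j)) ?_
      exact ⟨j₀, Finset.mem_univ j₀, mul_pos (hA i j₀) hj₀⟩
    rw [hmw] at hpos
    simp only [Pi.sub_apply, Pi.smul_apply, smul_eq_mul] at hpos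
    linarith
  set c := Finset.univ.sup' hNe (fun i => A.mulVec v i / v i) with hc
  have hcρ : c < ρ := by
    rw [hc, Finset.sup'_lt_iff]
    intro i _
    rw [div_lt_iff₀ (hvpos i)]
    exact hstrict i
  have hAvc : ∀ i, A.mulVec v i ≤ c * v i := by
    intro i
    rw [← div_le_iff₀ (hvpos i), hc]
    exact Finset.le_sup' (fun i => A.mulVec v i / v i) (Finset.mem_univ i)
  have hc0 : 0 ≤ c := by
    obtain ⟨i, -⟩ := id hNe
    have h1 : 0 < A.mulVec v i := by
      simp only [Matrix.mulVec, dotProduct]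
      exact Finset.sum_pos (fun j _ => mul_pos (hA i j) (hvpos j)) hNe
    have h2 : A.mulVec v i / v i ≤ c := by
      rw [hc]; exact Finset.le_sup' (fun i => A.mulVec v i / v i) (Finset.mem_univ i)
    exact le_trans (div_pos h1 (hvpos i)).le h2
  have hle : specRad A ≤ c := by
    unfold specRad
    refine Real.sSup_le ?_ hc0
    rintro y ⟨z, hz, rfl⟩
    exact eig_bound A (fun i j => (hA i j).le) v hvpos c hAvc z hz
  exact lt_of_le_of_lt hle hcρ
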